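/- If a simplicial set X is upper 2-Segal, then for every n > 0 and every 0 ≤ i ≤ n, the square with top s_{i+1} : X_{n+1} → X_{n+2}, left d_0 : X_{n+1} → X_n, right d_0 : X_{n+2} → X_{n+1}, bottom s_i : X_n → X_{n+1} is a pullback of sets. -/

import Mathlib

open CategoryTheory Simplicial

universe u

/-- A commuting square of sets (top `f`, left `g`, right `h`, bottom `k`) is a pullback
if the canonical map to the fiber product is a bijection. -/
def IsPullbackSet {A B C D : Type u} (f : A → B) (g : A → C) (h : B → D) (k : C → D) : Prop :=
  (∀ a, h (f a) = k (g a)) ∧ ∀ (b : B) (c : C), h b = k c → ∃! a : A, f a = b ∧ g a = c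

/-- The upper 2-Segal condition: for every `n ≥ 2` (here `n = m + 2`) and every `0 < i < n`,
the square with top `d_{i+1} : X_{n+1} → X_n`, left `d_0 : X_{n+1} → X_n`,
right `d_0 : X_n → X_{n-1}`, bottom `d_i : X_n → X_{n-1}` is a pullback. -/
def UpperTwoSegal (X : SSet.{u}) : Prop :=
  ∀ (m i : ℕ), 0 < i → ∀ h2 : i < m + 2,
    IsPullbackSet
      (fun x => X.δ (⟨i + 1, by omega⟩ : Fin (m + 4)) x)
      (fun x => X.δ (0 : Fin (m + 4)) x)
      (fun x => X.δ (0 : Fin (m + 3)) x)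
      (fun x => X.δ (⟨i, by omega⟩ : Fin (m + 3)) x)

lemma aux_d0_s (X : SSet.{u}) {n : ℕ} (j : ℕ) (hj : j < n + 1) (x : X _⦋n + 1⦌) :
    X.δ (0 : Fin (n + 3)) (X.σ (⟨j + 1, by omega⟩ : Fin (n + 2)) x) =
      X.σ (⟨j, by omega⟩ : Fin (n + 1)) (X.δ (0 : Fin (n + 2)) x) := by
  have := ConcreteCategory.congr_hom (X.δ_comp_σ_of_le (n := n) (i := 0) (j := ⟨j, hj⟩) (Fin.zero_le _)) x
  simpa using this

/-- d_0 d_{j+1} = d_j d_0 -/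
lemma aux_d0_d (X : SSet.{u}) {n : ℕ} (j : ℕ) (hj : j < n + 2) (x : X _⦋n + 2⦌) :
    X.δ (0 : Fin (n + 2)) (X.δ (⟨j + 1, by omega⟩ : Fin (n + 3)) x) =
      X.δ (⟨j, by omega⟩ : Fin (n + 2)) (X.δ (0 : Fin (n + 3)) x) := by
  have := ConcreteCategory.congr_hom (X.δ_comp_δ (n := n) (i := 0) (j := ⟨j, by omega⟩) (Fin.zero_le _)) x
  simpa using this

/-- d_j s_j = id -/
lemma aux_dj_sj (X : SSet.{u}) {n : ℕ} (j : ℕ) (hj : j < n + 1) (x : X _⦋n⦌) :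
    X.δ (⟨j, by omega⟩ : Fin (n + 2)) (X.σ (⟨j, hj⟩ : Fin (n + 1)) x) = x := by
  have := ConcreteCategory.congr_hom (X.δ_comp_σ_self (n := n) (i := ⟨j, hj⟩)) x
  simpa using this

/-- d_{j+1} s_j = id -/
lemma aux_dj1_sj (X : SSet.{u}) {n : ℕ} (j : ℕ) (hj : j < n + 1) (x : X _⦋n⦌) :
    X.δ (⟨j + 1, by omega⟩ : Fin (n + 2)) (X.σ (⟨j, hj⟩ : Fin (n + 1)) x) = x := by
  have := ConcreteCategory.congr_hom (X.δ_comp_σ_succ (n := n) (i := ⟨j, hj⟩)) x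
  simpa using this

/-- d_j s_{j+1} = s_j d_j -/
lemma aux_dj_sj1 (X : SSet.{u}) {n : ℕ} (j : ℕ) (hj : j < n + 1) (x : X _⦋n + 1⦌) :
    X.δ (⟨j, by omega⟩ : Fin (n + 3)) (X.σ (⟨j + 1, by omega⟩ : Fin (n + 2)) x) =
      X.σ (⟨j, by omega⟩ : Fin (n + 1)) (X.δ (⟨j, by omega⟩ : Fin (n + 2)) x) := by
  have := ConcreteCategory.congr_hom (X.δ_comp_σ_of_le (n := n) (i := ⟨j, by omega⟩) (j := ⟨j, hj⟩) (by simp)) x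
  simpa using this

/-- s_j s_j = s_{j+1} s_j -/
lemma aux_sj_sj (X : SSet.{u}) {n : ℕ} (j : ℕ) (hj : j < n + 1) (x : X _⦋n⦌) :
    X.σ (⟨j, by omega⟩ : Fin (n + 2)) (X.σ (⟨j, hj⟩ : Fin (n + 1)) x) =
      X.σ (⟨j + 1, by omega⟩ : Fin (n + 2)) (X.σ (⟨j, hj⟩ : Fin (n + 1)) x) := by
  have := ConcreteCategory.congr_hom (X.σ_comp_σ (n := n) (i := ⟨j, hj⟩) (j := ⟨j, hj⟩) le_rfl) x
  simpa using this
theorem upperTwoSegal_degeneracy_square (X : SSet.{u}) (h : UpperTwoSegal X)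
    (m i : ℕ) (hi : i ≤ m + 1) :
    IsPullbackSet
      (fun x => X.σ (⟨i + 1, by omega⟩ : Fin (m + 3)) x)
      (fun x => X.δ (0 : Fin (m + 3)) x)
      (fun x => X.δ (0 : Fin (m + 4)) x)
      (fun x => X.σ (⟨i, by omega⟩ : Fin (m + 2)) x) := by
  constructor
  · intro a
    exact aux_d0_s X (n := m + 1) i (by omega) a
  · intro b c hbc
    simp only at hbc
    set a : X _⦋m + 2⦌ := X.δ (⟨i + 1, by omega⟩ : Fin (m + 4)) b with ha
    have d0a : X.δ (0 : Fin (m + 3)) a = c := by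
      rw [ha, aux_d0_d X (n := m + 1) i (by omega) b, hbc,
        aux_dj_sj X (n := m + 1) i (by omega) c]
    -- the two degeneracies of b agree
    set u : X _⦋m + 4⦌ := X.σ (⟨i + 1, by omega⟩ : Fin (m + 4)) b with hu
    set v : X _⦋m + 4⦌ := X.σ (⟨i + 2, by omega⟩ : Fin (m + 4)) b with hv
    have h1 : X.δ (⟨i + 2, by omega⟩ : Fin (m + 5)) u = b := by
      have := aux_dj1_sj X (n := m + 3) (i + 1) (by omega) b
      rw [hu]; exact this
    have h2 : X.δ (⟨i + 2, by omega⟩ : Fin (m + 5)) v = b :=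
      aux_dj_sj X (n := m + 3) (i + 2) (by omega) b
    have h3 : X.δ (0 : Fin (m + 5)) u = X.σ (⟨i, by omega⟩ : Fin (m + 3)) (X.δ (0 : Fin (m + 4)) b) :=
      aux_d0_s X (n := m + 2) i (by omega) b
    have h4 : X.δ (0 : Fin (m + 5)) v = X.σ (⟨i + 1, by omega⟩ : Fin (m + 3)) (X.δ (0 : Fin (m + 4)) b) := by
      have := aux_d0_s X (n := m + 2) (i + 1) (by omega) b
      rw [hv]; exact this
    have h5 : X.δ (0 : Fin (m + 5)) u = X.δ (0 : Fin (m + 5)) v := by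
      rw [h3, h4, hbc, aux_sj_sj X (n := m + 1) i (by omega) c]
    obtain ⟨P1, P2⟩ := h (m + 1) (i + 1) (by omega) (by omega)
    have hcomm : X.δ (0 : Fin (m + 4)) b =
        X.δ (⟨i + 1, by omega⟩ : Fin (m + 4)) (X.δ (0 : Fin (m + 5)) u) := by
      have := P1 u
      simp only at this
      rw [h1] at this
      exact this
    obtain ⟨w, -, hwu⟩ := P2 b (X.δ (0 : Fin (m + 5)) u) hcomm
    have huv : u = v := by
      rw [hwu u ⟨h1, rfl⟩, hwu v ⟨h2, h5.symm⟩]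
    have hkey : X.σ (⟨i + 1, by omega⟩ : Fin (m + 3)) a = b := by
      have hL : X.δ (⟨i + 1, by omega⟩ : Fin (m + 5)) u = b :=
        aux_dj_sj X (n := m + 3) (i + 1) (by omega) b
      have hR : X.δ (⟨i + 1, by omega⟩ : Fin (m + 5)) v =
          X.σ (⟨i + 1, by omega⟩ : Fin (m + 3)) a := by
        have := aux_dj_sj1 X (n := m + 2) (i + 1) (by omega) b
        rw [hv, ha]; exact this
      rw [← hR, ← huv, hL]
    refine ⟨a, ⟨hkey, d0a⟩, ?_⟩
    rintro a' ⟨ha1, ha2⟩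
    simp only at ha1
    rw [ha, ← ha1, aux_dj_sj X (n := m + 2) (i + 1) (by omega) a']
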